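/- For z in the domain D = {E + iη : |E| ≤ 5, 0 < η ≤ 10}, the derivative of m_sc satisfies |m_sc'(z)| ∼ 1/√(κ+η) and the second derivative satisfies |m_sc''(z)| = O(1/(κ+η)^{3/2}), where κ = min(|E-2|, |E+2|). -/

import Mathlib

open Complex

lemma msc_first_identity (m : ℂ → ℂ)
    (hanalytic : AnalyticOn ℂ m {z : ℂ | 0 < z.im})
    (heq : ∀ z : ℂ, 0 < z.im → (m z) ^ 2 + z * m z + 1 = 0) :
    ∀ w : ℂ, 0 < w.im → 2 * m w * deriv m w + m w + w * deriv m w = 0 := by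
  have hU : IsOpen {z : ℂ | 0 < z.im} := isOpen_lt continuous_const Complex.continuous_im
  have hN : AnalyticOnNhd ℂ m {z : ℂ | 0 < z.im} :=
    (hU.analyticOn_iff_analyticOnNhd).mp hanalytic
  intro w hw
  have hdm : HasDerivAt m (deriv m w) w := (hN w hw).differentiableAt.hasDerivAt
  have hg : HasDerivAt (fun x => m x * m x + x * m x + 1)
      ((deriv m w * m w + m w * deriv m w) + (1 * m w + w * deriv m w) + 0) w :=
    ((hdm.mul hdm).add ((hasDerivAt_id w).mul hdm)).add (hasDerivAt_const w 1)
  have hzero : (fun x => m x * m x + x * m x + 1) =ᶠ[nhds w] (fun _ => (0:ℂ)) := by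
    filter_upwards [hU.mem_nhds hw] with x hx
    linear_combination heq x hx
  have hg0 : HasDerivAt (fun _ : ℂ => (0:ℂ))
      ((deriv m w * m w + m w * deriv m w) + (1 * m w + w * deriv m w) + 0) w :=
    hg.congr_of_eventuallyEq hzero.symm
  linear_combination hg0.unique (hasDerivAt_const w 0)

lemma msc_second_identity (m : ℂ → ℂ)
    (hanalytic : AnalyticOn ℂ m {z : ℂ | 0 < z.im})
    (heq : ∀ z : ℂ, 0 < z.im → (m z) ^ 2 + z * m z + 1 = 0) :
    ∀ w : ℂ, 0 < w.im →
      2 * (deriv m w) ^ 2 + 2 * m w * deriv (deriv m) w + 2 * deriv m w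
        + w * deriv (deriv m) w = 0 := by
  have hU : IsOpen {z : ℂ | 0 < z.im} := isOpen_lt continuous_const Complex.continuous_im
  have hN : AnalyticOnNhd ℂ m {z : ℂ | 0 < z.im} :=
    (hU.analyticOn_iff_analyticOnNhd).mp hanalytic
  have hN' : AnalyticOnNhd ℂ (deriv m) {z : ℂ | 0 < z.im} := hN.deriv
  intro w hw
  have hdm : HasDerivAt m (deriv m w) w := (hN w hw).differentiableAt.hasDerivAt
  have hdm2 : HasDerivAt (deriv m) (deriv (deriv m) w) w :=
    (hN' w hw).differentiableAt.hasDerivAt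
  have hg : HasDerivAt (fun x => 2 * m x * deriv m x + m x + x * deriv m x)
      (((2 * deriv m w) * deriv m w + (2 * m w) * deriv (deriv m) w) + deriv m w
        + (1 * deriv m w + w * deriv (deriv m) w)) w :=
    (((hdm.const_mul 2).mul hdm2).add hdm).add ((hasDerivAt_id w).mul hdm2)
  have hzero : (fun x => 2 * m x * deriv m x + m x + x * deriv m x) =ᶠ[nhds w]
      (fun _ => (0:ℂ)) := by
    filter_upwards [hU.mem_nhds hw] with x hx
    exact msc_first_identity m hanalytic heq x hx
  have hg0 : HasDerivAt (fun _ : ℂ => (0:ℂ))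
      (((2 * deriv m w) * deriv m w + (2 * m w) * deriv (deriv m) w) + deriv m w
        + (1 * deriv m w + w * deriv (deriv m) w)) w :=
    hg.congr_of_eventuallyEq hzero.symm
  linear_combination hg0.unique (hasDerivAt_const w 0)

lemma msc_geom (E η : ℝ) (hE : |E| ≤ 5) (hη : 0 < η) (hη10 : η ≤ 10) :
    (min |E - 2| |E + 2| + η) ^ 2 ≤ ((E - 2) ^ 2 + η ^ 2) * ((E + 2) ^ 2 + η ^ 2) ∧
    ((E - 2) ^ 2 + η ^ 2) * ((E + 2) ^ 2 + η ^ 2) ≤ 289 * (min |E - 2| |E + 2| + η) ^ 2 := by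
  set t := min |E - 2| |E + 2| + η with ht_def
  obtain ⟨hE1, hE2⟩ := abs_le.mp hE
  rcases le_total 0 E with hEpos | hEneg
  · have hmin : min |E - 2| |E + 2| = |E - 2| := by
      apply min_eq_left
      rw [_root_.abs_of_nonneg (by linarith : (0:ℝ) ≤ E + 2)]
      exact abs_le.mpr ⟨by linarith, by linarith⟩
    have hsq : |E - 2| ^ 2 = (E - 2) ^ 2 := sq_abs _
    have hy0 : 0 ≤ |E - 2| := abs_nonneg _
    have hp_le : (E - 2) ^ 2 + η ^ 2 ≤ t ^ 2 := by rw [ht_def, hmin]; nlinarith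
    have hp_ge : t ^ 2 ≤ 2 * ((E - 2) ^ 2 + η ^ 2) := by
      rw [ht_def, hmin]; nlinarith [sq_nonneg (|E - 2| - η)]
    have hq_ge : 4 ≤ (E + 2) ^ 2 + η ^ 2 := by nlinarith
    have hq_le : (E + 2) ^ 2 + η ^ 2 ≤ 149 := by nlinarith
    have hp0 : (0:ℝ) ≤ (E - 2) ^ 2 + η ^ 2 := by positivity
    have ht0 : (0:ℝ) ≤ t := by rw [ht_def]; positivity
    exact ⟨by nlinarith, by nlinarith⟩
  · have hmin : min |E - 2| |E + 2| = |E + 2| := by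
      apply min_eq_right
      rw [_root_.abs_of_nonpos (by linarith : E - 2 ≤ 0)]
      exact abs_le.mpr ⟨by linarith, by linarith⟩
    have hsq : |E + 2| ^ 2 = (E + 2) ^ 2 := sq_abs _
    have hy0 : 0 ≤ |E + 2| := abs_nonneg _
    have hp_le : (E + 2) ^ 2 + η ^ 2 ≤ t ^ 2 := by rw [ht_def, hmin]; nlinarith
    have hp_ge : t ^ 2 ≤ 2 * ((E + 2) ^ 2 + η ^ 2) := by
      rw [ht_def, hmin]; nlinarith [sq_nonneg (|E + 2| - η)]
    have hq_ge : 4 ≤ (E - 2) ^ 2 + η ^ 2 := by nlinarith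
    have hq_le : (E - 2) ^ 2 + η ^ 2 ≤ 149 := by nlinarith
    have hp0 : (0:ℝ) ≤ (E + 2) ^ 2 + η ^ 2 := by positivity
    have ht0 : (0:ℝ) ≤ t := by rw [ht_def]; positivity
    exact ⟨by nlinarith, by nlinarith⟩

set_option maxHeartbeats 1000000 in
/-- On the domain `D`, `|m_sc'(z)| ∼ 1/√(κ+η)` and `|m_sc''(z)| = O((κ+η)^{-3/2})`,
where `κ = min(|E-2|, |E+2|)`. -/
theorem deriv_msc_bounds (m : ℂ → ℂ)
    (hanalytic : AnalyticOn ℂ m {z : ℂ | 0 < z.im})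
    (hmap : ∀ z : ℂ, 0 < z.im → 0 < (m z).im)
    (heq : ∀ z : ℂ, 0 < z.im → (m z) ^ 2 + z * m z + 1 = 0) :
    ∃ c C : ℝ, 0 < c ∧ 0 < C ∧ ∀ E η : ℝ, |E| ≤ 5 → 0 < η → η ≤ 10 →
      c * (1 / Real.sqrt (min |E - 2| |E + 2| + η))
          ≤ ‖deriv m (E + η * Complex.I)‖ ∧
      ‖deriv m (E + η * Complex.I)‖
          ≤ C * (1 / Real.sqrt (min |E - 2| |E + 2| + η)) ∧
      ‖deriv (deriv m) (E + η * Complex.I)‖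
          ≤ C * (1 / Real.sqrt ((min |E - 2| |E + 2| + η) ^ 3)) := by
  refine ⟨1/200, 1000, by norm_num, by norm_num, fun E η hE hη hη10 => ?_⟩
  set z : ℂ := (E : ℂ) + (η : ℂ) * Complex.I with hz_def
  have hzim : 0 < z.im := by simp [hz_def, hη]
  have heqz := heq z hzim
  obtain ⟨hE1, hE2⟩ := abs_le.mp hE
  -- notation
  set M : ℝ := ‖m z‖ with hM_def
  set s : ℝ := ‖2 * m z + z‖ with hs_def
  set D : ℝ := ‖deriv m z‖ with hD_def
  set A : ℝ := ‖deriv (deriv m) z‖ with hA_def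
  set t : ℝ := min |E - 2| |E + 2| + η with ht_def
  have ht : 0 < t := by
    have : 0 ≤ min |E - 2| |E + 2| := le_min (abs_nonneg _) (abs_nonneg _)
    rw [ht_def]; linarith
  have ht17 : t ≤ 17 := by
    have h1 : min |E - 2| |E + 2| ≤ |E - 2| := min_le_left _ _
    have h2 : |E - 2| ≤ 7 := abs_le.mpr ⟨by linarith, by linarith⟩
    rw [ht_def]; linarith
  -- |z| ≤ 15
  have hzabs : ‖z‖ ≤ 15 := by
    calc ‖z‖ ≤ ‖(E : ℂ)‖ + ‖(η : ℂ) * Complex.I‖ :=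
          norm_add_le _ _
      _ = |E| + |η| := by simp
      _ ≤ 15 := by rw [_root_.abs_of_pos hη]; linarith
  have hM0 : 0 ≤ M := norm_nonneg _
  have hD0 : 0 ≤ D := norm_nonneg _
  have hA0 : 0 ≤ A := norm_nonneg _
  -- M ≤ 16
  have hM16 : M ≤ 16 := by
    have h1 : (m z) ^ 2 = -(z * m z + 1) := by linear_combination heqz
    have h2 : M ^ 2 = ‖z * m z + 1‖ := by
      rw [hM_def, ← norm_pow, h1, norm_neg]
    have h3 : ‖z * m z + 1‖ ≤ ‖z‖ * M + 1 := by
      calc ‖z * m z + 1‖ ≤ ‖z * m z‖ + ‖1‖ :=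
            norm_add_le _ _
        _ = ‖z‖ * M + 1 := by rw [norm_mul]; simp [hM_def]
    nlinarith [sq_nonneg (M - 16), mul_le_mul_of_nonneg_right hzabs hM0]
  -- M ≥ 1/31
  have hM_lb : 1/31 ≤ M := by
    have h1 : m z * (m z + z) = -1 := by linear_combination heqz
    have h2 : M * ‖m z + z‖ = 1 := by
      rw [hM_def, ← norm_mul, h1]; simp
    have h3 : ‖m z + z‖ ≤ 31 := by
      calc ‖m z + z‖ ≤ M + ‖z‖ := norm_add_le _ _
        _ ≤ 31 := by linarith
    nlinarith [norm_nonneg (m z + z)]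
  -- s^2 = |z-2||z+2|, then s^4 = p*q
  have hsq_eq : (2 * m z + z) ^ 2 = z ^ 2 - 4 := by linear_combination 4 * heqz
  have hzm2 : z - 2 = ((E - 2 : ℝ) : ℂ) + ((η : ℝ) : ℂ) * Complex.I := by
    rw [hz_def]; push_cast; ring
  have hzp2 : z + 2 = ((E + 2 : ℝ) : ℂ) + ((η : ℝ) : ℂ) * Complex.I := by
    rw [hz_def]; push_cast; ring
  have hs2 : s ^ 2 = Real.sqrt ((E - 2) ^ 2 + η ^ 2) * Real.sqrt ((E + 2) ^ 2 + η ^ 2) := by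
    rw [hs_def, ← norm_pow, hsq_eq, show z ^ 2 - 4 = (z - 2) * (z + 2) by ring, norm_mul,
      hzm2, hzp2, Complex.norm_add_mul_I, Complex.norm_add_mul_I]
  have hs4 : (s ^ 2) ^ 2 = ((E - 2) ^ 2 + η ^ 2) * ((E + 2) ^ 2 + η ^ 2) := by
    rw [hs2, mul_pow, Real.sq_sqrt (by positivity), Real.sq_sqrt (by positivity)]
  obtain ⟨hg1, hg2⟩ := msc_geom E η hE hη hη10
  rw [← ht_def] at hg1 hg2
  have hs0 : 0 ≤ s := norm_nonneg _
  have hs2_ge : t ≤ s ^ 2 := by nlinarith [sq_nonneg s]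
  have hs2_le : s ^ 2 ≤ 17 * t := by nlinarith [sq_nonneg s]
  have hspos : 0 < s := by nlinarith
  -- u = sqrt t
  set u : ℝ := Real.sqrt t with hu_def
  have hu : 0 < u := Real.sqrt_pos.mpr ht
  have hu2 : u ^ 2 = t := Real.sq_sqrt ht.le
  have hu5 : u ≤ 5 := by nlinarith
  have hus : u ≤ s := by nlinarith
  have hs5u : s ≤ 5 * u := by nlinarith
  -- D * s = M
  have hfirst := msc_first_identity m hanalytic heq z hzim
  have hDid : deriv m z * (2 * m z + z) = -(m z) := by linear_combination hfirst
  have hDs : D * s = M := by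
    rw [hD_def, hs_def, hM_def, ← norm_mul, hDid, norm_neg]
  -- A * s ≤ 2 D^2 + 2 D
  have hsecond := msc_second_identity m hanalytic heq z hzim
  have hAid : deriv (deriv m) z * (2 * m z + z)
      = -(2 * (deriv m z) ^ 2 + 2 * deriv m z) := by linear_combination hsecond
  have hAs : A * s ≤ 2 * D ^ 2 + 2 * D := by
    have h1 : A * s = ‖2 * (deriv m z) ^ 2 + 2 * deriv m z‖ := by
      rw [hA_def, hs_def, ← norm_mul, hAid, norm_neg]
    rw [h1]
    calc ‖2 * (deriv m z) ^ 2 + 2 * deriv m z‖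
        ≤ ‖2 * (deriv m z) ^ 2‖ + ‖2 * deriv m z‖ :=
          norm_add_le _ _
      _ = 2 * D ^ 2 + 2 * D := by rw [norm_mul, norm_mul, norm_pow]; simp [hD_def]
  -- bounds on D*u
  have hDu_le : D * u ≤ 16 := by
    have : D * u ≤ D * s := mul_le_mul_of_nonneg_left hus hD0
    linarith [hDs ▸ this, hM16]
  have hDu_ge : 1/155 ≤ D * u := by
    have h1 : D * s ≤ D * (5 * u) := mul_le_mul_of_nonneg_left hs5u hD0
    nlinarith
  -- conclude
  have hsqrt3 : Real.sqrt (t ^ 3) = u ^ 3 := by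
    rw [show t ^ 3 = (u ^ 3) ^ 2 by rw [← hu2]; ring, Real.sqrt_sq (by positivity)]
  refine ⟨?_, ?_, ?_⟩
  · rw [mul_one_div, div_le_iff₀ hu]
    nlinarith
  · rw [mul_one_div, le_div_iff₀ hu]
    linarith
  · rw [hsqrt3, mul_one_div, le_div_iff₀ (by positivity : (0:ℝ) < u ^ 3)]
    have h1 : A * u ≤ A * s := mul_le_mul_of_nonneg_left hus hA0
    have h2 : (A * s) * u ^ 2 ≤ (2 * D ^ 2 + 2 * D) * u ^ 2 :=
      mul_le_mul_of_nonneg_right hAs (sq_nonneg u)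
    nlinarith [sq_nonneg (D * u), mul_nonneg hD0 hu.le, mul_nonneg hA0 hu.le]
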